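/- Fix ι ∈ {identity, complex conjugation} on ℂ and ε ∈ {1,−1}. Let V be an isotypical H-module of type π equipped with an H-invariant nondegenerate (ι,ε)-symmetric form B, and suppose π admits an H-invariant nondegenerate (ι,ε)-symmetric form. Then V contains at least one irreducible H-invariant subspace on which the restriction of B is nondegenerate. -/

import Mathlib

variable {H V P : Type*}

/-- `U` is invariant under the representation `ρ`. -/
def Invt [Group H] [AddCommGroup V] [Module ℂ V] (ρ : Representation ℂ H V)
    (U : Submodule ℂ V) : Prop :=
  ∀ (h : H) (v : V), v ∈ U → ρ h v ∈ U

/-- `V` is a semisimple `H`-module. -/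
def Semisimple [Group H] [AddCommGroup V] [Module ℂ V] (ρ : Representation ℂ H V) : Prop :=
  ∀ U : Submodule ℂ V, Invt ρ U → ∃ U', Invt ρ U' ∧ IsCompl U U'

/-- `U` is an irreducible invariant subspace. -/
def IrredSub [Group H] [AddCommGroup V] [Module ℂ V] (ρ : Representation ℂ H V)
    (U : Submodule ℂ V) : Prop :=
  Invt ρ U ∧ U ≠ ⊥ ∧ ∀ U' ≤ U, Invt ρ U' → U' = ⊥ ∨ U' = U

/-- The invariant subspace `U ⊆ V` is isomorphic, as an `H`-module, to the external
`H`-module `P`. -/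
def RepIsoExt [Group H] [AddCommGroup V] [Module ℂ V] [AddCommGroup P] [Module ℂ P]
    (ρ : Representation ℂ H V) (ρP : Representation ℂ H P) (U : Submodule ℂ V) : Prop :=
  ∃ e : U ≃ₗ[ℂ] P, ∀ (h : H) (v : V) (hv : v ∈ U) (hv' : ρ h v ∈ U),
    e ⟨ρ h v, hv'⟩ = ρP h (e ⟨v, hv⟩)

section Aux

lemma rho_cancel {M : Type*} [Group H] [AddCommGroup M] [Module ℂ M]
    (ρ : Representation ℂ H M) (h : H) (v : M) : ρ h (ρ h⁻¹ v) = v := by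
  have h1 : ρ h * ρ h⁻¹ = 1 := by rw [← map_mul, mul_inv_cancel, map_one]
  calc ρ h (ρ h⁻¹ v) = (ρ h * ρ h⁻¹) v := rfl
    _ = v := by rw [h1]; rfl

lemma exists_irred [Group H] [AddCommGroup V] [Module ℂ V] [FiniteDimensional ℂ V]
    (ρ : Representation ℂ H V) (U : Submodule ℂ V) (hU : Invt ρ U) (hne : U ≠ ⊥) :
    ∃ W, W ≤ U ∧ IrredSub ρ W := by
  generalize hn : Module.finrank ℂ U = n
  induction n using Nat.strong_induction_on generalizing U with
  | _ n ih =>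
    by_cases hirr : ∀ U' ≤ U, Invt ρ U' → U' = ⊥ ∨ U' = U
    · exact ⟨U, le_refl U, hU, hne, hirr⟩
    · push_neg at hirr
      obtain ⟨U', hle, hinv, hbot, hneU⟩ := hirr
      have hlt : U' < U := lt_of_le_of_ne hle hneU
      have hdim : Module.finrank ℂ U' < n := hn ▸ Submodule.finrank_lt_finrank_of_lt hlt
      obtain ⟨W, hW1, hW2⟩ := ih _ hdim U' hinv hbot rfl
      exact ⟨W, hW1.trans hle, hW2⟩

lemma ext_from_basis {P : Type*} [AddCommGroup P] [Module ℂ P]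
    {n : ℕ} (σ : ℂ →+* ℂ) (bx : Module.Basis (Fin n) ℂ P) (d : P → ℂ)
    (hd1 : ∀ x x', d (x + x') = d x + d x')
    (hd3 : ∀ (a : ℂ) x, d (a • x) = σ a * d x)
    (hbasis : ∀ i, d (bx i) = 0) : ∀ x, d x = 0 := by
  have h0 : d 0 = 0 := by
    have := hd3 0 0
    simpa using this
  let K : Submodule ℂ P :=
    { carrier := {x | d x = 0}
      add_mem' := fun ha hb => by simp only [Set.mem_setOf_eq] at *; rw [hd1]; rw [ha, hb]; ring
      zero_mem' := h0
      smul_mem' := fun a x hx => by simp only [Set.mem_setOf_eq] at *; rw [hd3, hx]; ring }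
  have hK : (⊤ : Submodule ℂ P) ≤ K := by
    rw [← bx.span_eq]
    exact Submodule.span_le.mpr (fun y ⟨i, hi⟩ => by simp only [SetLike.mem_coe]; exact hi ▸ hbasis i)
  intro x
  have : x ∈ K := hK Submodule.mem_top
  exact this

lemma schur_scalar {P : Type*} [Group H] [AddCommGroup P] [Module ℂ P]
    [FiniteDimensional ℂ P] [Nontrivial P]
    (σ : ℂ →+* ℂ) (ρP : Representation ℂ H P)
    (hPirr : ∀ U : Submodule ℂ P, (∀ (h : H) (v : P), v ∈ U → ρP h v ∈ U) → U = ⊥ ∨ U = ⊤)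
    (b c : P → P → ℂ)
    (hb1 : ∀ v v' w, b (v + v') w = b v w + b v' w)
    (hb2 : ∀ v w w', b v (w + w') = b v w + b v w')
    (hb3 : ∀ (a : ℂ) (v w : P), b (a • v) w = σ a * b v w)
    (hb4 : ∀ (a : ℂ) (v w : P), b v (a • w) = a * b v w)
    (hbinv : ∀ (h : H) (v w : P), b (ρP h v) (ρP h w) = b v w)
    (hbndR : ∀ w, (∀ v, b v w = 0) → w = 0)
    (hc1 : ∀ v v' w, c (v + v') w = c v w + c v' w)
    (hc2 : ∀ v w w', c v (w + w') = c v w + c v w')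
    (hc3 : ∀ (a : ℂ) (v w : P), c (a • v) w = σ a * c v w)
    (hc4 : ∀ (a : ℂ) (v w : P), c v (a • w) = a * c v w)
    (hcinv : ∀ (h : H) (v w : P), c (ρP h v) (ρP h w) = c v w)
    (hcndR : ∀ w, (∀ v, c v w = 0) → w = 0) :
    ∃ μ : ℂ, μ ≠ 0 ∧ ∀ x y, c x y = μ * b x y := by
  classical
  set n := Module.finrank ℂ P with hn
  let bx : Module.Basis (Fin n) ℂ P := Module.finBasis ℂ P
  have bz : ∀ v, b v 0 = 0 := fun v => by have := hb4 0 v 0; simpa using this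
  have mkG : ∀ (d : P → P → ℂ), (∀ v w w', d v (w + w') = d v w + d v w') →
      (∀ (a : ℂ) (v w : P), d v (a • w) = a * d v w) →
      ∃ G : P →ₗ[ℂ] (Fin n → ℂ), ∀ z i, G z i = d (bx i) z := by
    intro d hd2 hd4
    exact ⟨{ toFun := fun z i => d (bx i) z,
             map_add' := fun z z' => funext fun i => hd2 _ _ _,
             map_smul' := fun a z => funext fun i => by simp [hd4] }, fun z i => rfl⟩
  obtain ⟨Gb, hGb⟩ := mkG b hb2 hb4
  obtain ⟨Gc, hGc⟩ := mkG c hc2 hc4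
  let E : P →ₗ[ℂ] P := bx.equivFun.symm.toLinearMap ∘ₗ Gb
  let F : P →ₗ[ℂ] P := bx.equivFun.symm.toLinearMap ∘ₗ Gc
  have hker : ∀ z, E z = 0 → z = 0 := by
    intro z hz
    have hGz : Gb z = 0 := by
      have e1 : bx.equivFun (E z) = Gb z := bx.equivFun.apply_symm_apply _
      rw [hz, map_zero] at e1
      exact e1.symm
    have hbas : ∀ i, b (bx i) z = 0 := by
      intro i
      rw [← hGb z i, hGz]
      rfl
    exact hbndR z (ext_from_basis σ bx (fun x => b x z) (fun u u' => hb1 u u' z)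
      (fun a u => hb3 a u z) hbas)
  have hEinj : Function.Injective E := by
    intro z z' h
    have h2 : z - z' = 0 := hker _ (by rw [map_sub, h, sub_self])
    exact sub_eq_zero.mp h2
  have hEsurj : Function.Surjective E := (LinearMap.injective_iff_surjective).mp hEinj
  let Eeq : P ≃ₗ[ℂ] P := LinearEquiv.ofBijective E ⟨hEinj, hEsurj⟩
  let A : P →ₗ[ℂ] P := Eeq.symm.toLinearMap ∘ₗ F
  have hEA : ∀ y, E (A y) = F y := fun y => Eeq.apply_symm_apply (F y)
  have key : ∀ x y, b x (A y) = c x y := by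
    intro x y
    have h2 : Gb (A y) = Gc y := by
      have e1 : bx.equivFun (E (A y)) = Gb (A y) := bx.equivFun.apply_symm_apply _
      have e2 : bx.equivFun (F y) = Gc y := bx.equivFun.apply_symm_apply _
      rw [← e1, ← e2, hEA]
    have hbas : ∀ i, b (bx i) (A y) - c (bx i) y = 0 := by
      intro i
      rw [← hGb _ i, ← hGc _ i, h2, sub_self]
    have := ext_from_basis σ bx (fun x => b x (A y) - c x y)
      (fun u u' => by show b (u + u') (A y) - c (u + u') y = _; rw [hb1, hc1]; ring)
      (fun a u => by show b (a • u) (A y) - c (a • u) y = _; rw [hb3, hc3]; ring) hbas x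
    exact sub_eq_zero.mp this
  have bneg : ∀ v w, b v (-w) = - b v w := fun v w => by
    have := hb4 (-1) v w; simpa using this
  have bsub : ∀ v w w', b v (w - w') = b v w - b v w' := fun v w w' => by
    rw [sub_eq_add_neg, hb2, bneg, ← sub_eq_add_neg]
  have hAequiv : ∀ (h : H) y, A (ρP h y) = ρP h (A y) := by
    intro h y
    have hall : ∀ x, b x (A (ρP h y) - ρP h (A y)) = 0 := by
      intro x
      rw [bsub]
      have e1 : b x (A (ρP h y)) = c x (ρP h y) := key x _
      have e2 : c x (ρP h y) = c (ρP h⁻¹ x) y := by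
        conv_lhs => rw [← rho_cancel ρP h x]
        rw [hcinv]
      have e3 : b (ρP h⁻¹ x) (A y) = b x (ρP h (A y)) := by
        conv_rhs => rw [← rho_cancel ρP h x]
        rw [hbinv]
      rw [e1, e2, ← key, e3, sub_self]
    exact sub_eq_zero.mp (hbndR _ hall)
  obtain ⟨μ, hμ⟩ := Module.End.exists_eigenvalue (A : Module.End ℂ P)
  have hinvt : ∀ (h : H) (y : P), y ∈ Module.End.eigenspace A μ → ρP h y ∈ Module.End.eigenspace A μ := by
    intro h y hy
    rw [Module.End.mem_eigenspace_iff] at hy ⊢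
    rw [hAequiv, hy, map_smul]
  have heig : Module.End.eigenspace A μ = ⊤ := by
    rcases hPirr (Module.End.eigenspace A μ) hinvt with h | h
    · exact absurd h hμ
    · exact h
  have hA : ∀ y, A y = μ • y := fun y =>
    Module.End.mem_eigenspace_iff.mp (heig ▸ Submodule.mem_top)
  have hμ0 : μ ≠ 0 := by
    intro h0
    obtain ⟨y, hy⟩ := exists_ne (0 : P)
    have : ∀ x, c x y = 0 := fun x => by rw [← key, hA, h0, zero_smul, bz]
    exact hy (hcndR y this)
  exact ⟨μ, hμ0, fun x y => by rw [← key, hA, hb4]⟩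

lemma radical_all_zero [Group H] [AddCommGroup V] [Module ℂ V]
    (σ : ℂ →+* ℂ) (ρ : Representation ℂ H V)
    (B : V → V → ℂ)
    (hB1 : ∀ v v' w, B (v + v') w = B v w + B v' w)
    (hB3 : ∀ (a : ℂ) (v w : V), B (a • v) w = σ a * B v w)
    (hBinv : ∀ (h : H) (v w : V), B (ρ h v) (ρ h w) = B v w)
    (W : Submodule ℂ V) (hW : IrredSub ρ W)
    (hdeg : ¬ ∀ v ∈ W, (∀ w ∈ W, B v w = 0) → v = 0) :
    ∀ v ∈ W, ∀ w ∈ W, B v w = 0 := by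
  have hB0 : ∀ w, B 0 w = 0 := fun w => by
    have := hB3 0 0 w; simpa using this
  let R : Submodule ℂ V :=
    { carrier := {v | v ∈ W ∧ ∀ w ∈ W, B v w = 0}
      add_mem' := fun {a b} ha hb => ⟨W.add_mem ha.1 hb.1, fun w hw => by
        rw [hB1, ha.2 w hw, hb.2 w hw, add_zero]⟩
      zero_mem' := ⟨W.zero_mem, fun w hw => hB0 w⟩
      smul_mem' := fun a v hv => ⟨W.smul_mem a hv.1, fun w hw => by
        show B (a • v) w = 0
        rw [hB3, hv.2 w hw, mul_zero]⟩ }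
  have hRW : R ≤ W := fun v hv => hv.1
  have hRinv : Invt ρ R := by
    intro h v hv
    refine ⟨hW.1 h v hv.1, fun w hw => ?_⟩
    have hrw : B (ρ h v) w = B v (ρ h⁻¹ w) := by
      conv_lhs => rw [← rho_cancel ρ h w]
      rw [hBinv]
    rw [hrw]
    exact hv.2 _ (hW.1 h⁻¹ w hw)
  rcases hW.2.2 R hRW hRinv with h | h
  · exfalso
    apply hdeg
    intro v hv hvz
    have hm : v ∈ R := ⟨hv, hvz⟩
    rw [h] at hm
    simpa using hm
  · intro v hv w hw
    have hm : v ∈ R := h ▸ hv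
    exact hm.2 w hw

end Aux
/-- Let `(V,B)` be an isotypical `H`-module of type `π` with an invariant
nondegenerate `(ι,ε)`-symmetric form, where `π` admits an invariant nondegenerate
`(ι,ε)`-symmetric form. Then `V` contains an irreducible invariant subspace on which the
restriction of `B` is nondegenerate. -/
theorem stmt_9 [Group H] [AddCommGroup V] [Module ℂ V] [FiniteDimensional ℂ V]
    [Nontrivial V] [AddCommGroup P] [Module ℂ P] [FiniteDimensional ℂ P]
    (σ : ℂ →+* ℂ) (hσ : σ = RingHom.id ℂ ∨ σ = starRingEnd ℂ)
    (ε : ℂ) (hε : ε = 1 ∨ ε = -1)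
    (ρ : Representation ℂ H V) (hss : Semisimple ρ)
    (ρP : Representation ℂ H P)
    (hPss : ∀ U : Submodule ℂ P, (∀ (h : H) (v : P), v ∈ U → ρP h v ∈ U) →
      ∃ U', (∀ (h : H) (v : P), v ∈ U' → ρP h v ∈ U') ∧ IsCompl U U')
    (hPirr : ∀ U : Submodule ℂ P, (∀ (h : H) (v : P), v ∈ U → ρP h v ∈ U) →
      U = ⊥ ∨ U = ⊤)
    -- V is isotypical of type π
    (hisot : ∀ U : Submodule ℂ V, IrredSub ρ U → RepIsoExt ρ ρP U)
    -- π admits an invariant nondegenerate (ι,ε)-symmetric form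
    (hPform : ∃ b : P → P → ℂ,
      (∀ v v' w, b (v + v') w = b v w + b v' w) ∧
      (∀ v w w', b v (w + w') = b v w + b v w') ∧
      (∀ (a : ℂ) (v w : P), b (a • v) w = σ a * b v w) ∧
      (∀ (a : ℂ) (v w : P), b v (a • w) = a * b v w) ∧
      (∀ (h : H) (v w : P), b (ρP h v) (ρP h w) = b v w) ∧
      (∀ v w, b w v = ε * σ (b v w)) ∧
      (∀ v, (∀ w, b v w = 0) → v = 0))
    -- B is an invariant nondegenerate (ι,ε)-symmetric form on V
    (B : V → V → ℂ)
    (hB1 : ∀ v v' w, B (v + v') w = B v w + B v' w)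
    (hB2 : ∀ v w w', B v (w + w') = B v w + B v w')
    (hB3 : ∀ (a : ℂ) (v w : V), B (a • v) w = σ a * B v w)
    (hB4 : ∀ (a : ℂ) (v w : V), B v (a • w) = a * B v w)
    (hBinv : ∀ (h : H) (v w : V), B (ρ h v) (ρ h w) = B v w)
    (hBsym : ∀ v w, B w v = ε * σ (B v w))
    (hBnd : ∀ v, (∀ w, B v w = 0) → v = 0) :
    ∃ W : Submodule ℂ V, IrredSub ρ W ∧
      ∀ v ∈ W, (∀ w ∈ W, B v w = 0) → v = 0 := by
  classical
  -- basic facts about σ and ε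
  have hσσ : ∀ x, σ (σ x) = x := by
    rcases hσ with h | h <;> subst h <;> intro x <;> simp
  have hσε : σ ε = ε := by rcases hε with h | h <;> subst h <;> simp
  have hεε : ε * ε = 1 := by rcases hε with h | h <;> subst h <;> ring
  obtain ⟨b, hb1, hb2, hb3, hb4, hbinv, hbsym, hbnd⟩ := hPform
  have hB0L : ∀ w, B 0 w = 0 := fun w => by have := hB3 0 0 w; simpa using this
  have hB0R : ∀ v, B v 0 = 0 := fun v => by have := hB4 0 v 0; simpa using this
  -- first irreducible subspace
  have htopne : (⊤ : Submodule ℂ V) ≠ ⊥ := by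
    intro h
    obtain ⟨x, hx⟩ := exists_ne (0 : V)
    exact hx ((Submodule.mem_bot ℂ).mp (h ▸ Submodule.mem_top))
  obtain ⟨W₁, -, hW₁⟩ := exists_irred ρ ⊤ (fun h v _ => Submodule.mem_top) htopne
  by_cases hcase1 : ∀ v ∈ W₁, (∀ w ∈ W₁, B v w = 0) → v = 0
  · exact ⟨W₁, hW₁, hcase1⟩
  have hW₁0 : ∀ v ∈ W₁, ∀ w ∈ W₁, B v w = 0 :=
    radical_all_zero σ ρ B hB1 hB3 hBinv W₁ hW₁ hcase1
  have hW₁inv := hW₁.1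
  have hW₁ne := hW₁.2.1
  -- Y : right-perp of W₁
  let Y : Submodule ℂ V :=
    { carrier := {w | ∀ v ∈ W₁, B v w = 0}
      add_mem' := fun {x y} hx hy => fun v hv => by
        show B v (x + y) = 0
        rw [hB2, hx v hv, hy v hv, add_zero]
      zero_mem' := fun v hv => hB0R v
      smul_mem' := fun a w hw => fun v hv => by
        show B v (a • w) = 0
        rw [hB4, hw v hv, mul_zero] }
  have hYinv : Invt ρ Y := by
    intro h w hw v hv
    show B v (ρ h w) = 0
    have hrw : B v (ρ h w) = B (ρ h⁻¹ v) w := by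
      conv_lhs => rw [← rho_cancel ρ h v]
      rw [hBinv]
    rw [hrw]
    exact hw _ (hW₁inv h⁻¹ v hv)
  obtain ⟨Z, hZinv, hZcompl⟩ := hss Y hYinv
  have hZne : Z ≠ ⊥ := by
    intro h0
    have hYtop : Y = ⊤ := by
      have h1 := hZcompl.sup_eq_top
      rw [h0, sup_bot_eq] at h1
      exact h1
    obtain ⟨v, hvW, hv0⟩ := (Submodule.ne_bot_iff W₁).mp hW₁ne
    apply hv0
    apply hBnd
    intro w
    have hwY : w ∈ Y := hYtop ▸ Submodule.mem_top
    exact hwY v hvW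
  obtain ⟨W₂, hW₂Z, hW₂⟩ := exists_irred ρ Z hZinv hZne
  have hW₂inv := hW₂.1
  have hW₂ne := hW₂.2.1
  have hYZ : Y ⊓ Z = ⊥ := hZcompl.inf_eq_bot
  have hW₁Y : W₁ ≤ Y := fun w hw => fun v hv => hW₁0 v hv w hw
  have hPairR : ∀ w ∈ W₂, (∀ v ∈ W₁, B v w = 0) → w = 0 := by
    intro w hw hz
    have hm : w ∈ Y ⊓ Z := ⟨hz, hW₂Z hw⟩
    rw [hYZ] at hm
    simpa using hm
  by_cases hcase2 : ∀ v ∈ W₂, (∀ w ∈ W₂, B v w = 0) → v = 0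
  · exact ⟨W₂, hW₂, hcase2⟩
  have hW₂0 : ∀ v ∈ W₂, ∀ w ∈ W₂, B v w = 0 :=
    radical_all_zero σ ρ B hB1 hB3 hBinv W₂ hW₂ hcase2
  -- isomorphisms with P
  obtain ⟨e₁, he₁⟩ := hisot W₁ hW₁
  obtain ⟨e₂, he₂⟩ := hisot W₂ hW₂
  have he₁' : ∀ (h : H) (v : W₁), e₁ ⟨ρ h ↑v, hW₁inv h ↑v v.2⟩ = ρP h (e₁ v) := by
    intro h v
    have := he₁ h ↑v v.2 (hW₁inv h ↑v v.2)
    simpa using this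
  have he₂' : ∀ (h : H) (w : W₂), e₂ ⟨ρ h ↑w, hW₂inv h ↑w w.2⟩ = ρP h (e₂ w) := by
    intro h w
    have := he₂ h ↑w w.2 (hW₂inv h ↑w w.2)
    simpa using this
  have he₁symm : ∀ (h : H) (x : P), (↑(e₁.symm (ρP h x)) : V) = ρ h ↑(e₁.symm x) := by
    intro h x
    have h1 := he₁' h (e₁.symm x)
    rw [e₁.apply_symm_apply] at h1
    have h2 : (⟨ρ h ↑(e₁.symm x), hW₁inv h ↑(e₁.symm x) (e₁.symm x).2⟩ : W₁)
        = e₁.symm (ρP h x) := by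
      rw [← h1, e₁.symm_apply_apply]
    exact (congrArg Subtype.val h2).symm
  have he₂symm : ∀ (h : H) (x : P), (↑(e₂.symm (ρP h x)) : V) = ρ h ↑(e₂.symm x) := by
    intro h x
    have h1 := he₂' h (e₂.symm x)
    rw [e₂.apply_symm_apply] at h1
    have h2 : (⟨ρ h ↑(e₂.symm x), hW₂inv h ↑(e₂.symm x) (e₂.symm x).2⟩ : W₂)
        = e₂.symm (ρP h x) := by
      rw [← h1, e₂.symm_apply_apply]
    exact (congrArg Subtype.val h2).symm
  -- transported pairing
  set ct : P → P → ℂ := fun x y => B ↑(e₁.symm x) ↑(e₂.symm y) with hct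
  have hc1 : ∀ x x' y, ct (x + x') y = ct x y + ct x' y := by
    intro x x' y
    show B ↑(e₁.symm (x + x')) ↑(e₂.symm y) = _
    rw [map_add, Submodule.coe_add, hB1]
  have hc2 : ∀ x y y', ct x (y + y') = ct x y + ct x y' := by
    intro x y y'
    show B ↑(e₁.symm x) ↑(e₂.symm (y + y')) = _
    rw [map_add, Submodule.coe_add, hB2]
  have hc3 : ∀ (a : ℂ) (x y : P), ct (a • x) y = σ a * ct x y := by
    intro a x y
    show B ↑(e₁.symm (a • x)) ↑(e₂.symm y) = _
    rw [map_smul, Submodule.coe_smul, hB3]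
  have hc4 : ∀ (a : ℂ) (x y : P), ct x (a • y) = a * ct x y := by
    intro a x y
    show B ↑(e₁.symm x) ↑(e₂.symm (a • y)) = _
    rw [map_smul, Submodule.coe_smul, hB4]
  have hcinv : ∀ (h : H) (x y : P), ct (ρP h x) (ρP h y) = ct x y := by
    intro h x y
    show B ↑(e₁.symm (ρP h x)) ↑(e₂.symm (ρP h y)) = _
    rw [he₁symm, he₂symm, hBinv]
  have hcndR : ∀ y, (∀ x, ct x y = 0) → y = 0 := by
    intro y hy
    have hz : (↑(e₂.symm y) : V) = 0 := by
      apply hPairR _ (e₂.symm y).2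
      intro v hv
      have h1 := hy (e₁ ⟨v, hv⟩)
      rw [hct] at h1
      simp only at h1
      rwa [e₁.symm_apply_apply] at h1
    have h0 : e₂.symm y = 0 := Subtype.ext hz
    rw [← e₂.apply_symm_apply y, h0, map_zero]
  have hbndR : ∀ w, (∀ v, b v w = 0) → w = 0 := by
    intro w hw
    apply hbnd
    intro v
    rw [hbsym v w, hw v, map_zero, mul_zero]
  -- Nontrivial P
  haveI : Nontrivial W₁ := Submodule.nontrivial_iff_ne_bot.mpr hW₁ne
  haveI : Nontrivial P := e₁.symm.toEquiv.nontrivial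
  -- Schur's lemma
  obtain ⟨μ, hμ0, hμ⟩ := schur_scalar σ ρP hPirr b ct hb1 hb2 hb3 hb4 hbinv hbndR
    hc1 hc2 hc3 hc4 hcinv hcndR
  -- choose the scaling factor
  obtain ⟨l, hl⟩ : ∃ l : ℂ, l * μ + σ (l * μ) ≠ 0 := by
    rcases hσ with h | h
    · refine ⟨1, fun hh => hμ0 ?_⟩
      rw [h] at hh
      simp only [RingHom.id_apply, one_mul] at hh
      linear_combination hh / 2
    · by_cases h1 : μ + σ μ = 0
      · refine ⟨Complex.I, fun hh => hμ0 ?_⟩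
        rw [h] at hh h1
        have hc : (starRingEnd ℂ) (Complex.I * μ) = - Complex.I * (starRingEnd ℂ) μ := by
          rw [map_mul, Complex.conj_I]
        rw [hc] at hh
        have h2 : (starRingEnd ℂ) μ = -μ := by linear_combination h1
        rw [h2] at hh
        have h3 : Complex.I * (2 * μ) = 0 := by linear_combination hh
        rcases mul_eq_zero.mp h3 with h4 | h4
        · exact absurd h4 Complex.I_ne_zero
        · rcases mul_eq_zero.mp h4 with h5 | h5
          · exact absurd h5 two_ne_zero
          · exact h5
      · exact ⟨1, by simpa using h1⟩
  -- the graph submodule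
  let s : W₁ →ₗ[ℂ] V := W₂.subtype ∘ₗ (e₂.symm.toLinearMap ∘ₗ e₁.toLinearMap)
  let f : W₁ →ₗ[ℂ] V := W₁.subtype + l • s
  have hfapply : ∀ v : W₁, f v = ↑v + l • ↑(e₂.symm (e₁ v)) := fun v => rfl
  set W : Submodule ℂ V := LinearMap.range f with hWdef
  have hfequiv : ∀ (h : H) (v : W₁), f ⟨ρ h ↑v, hW₁inv h ↑v v.2⟩ = ρ h (f v) := by
    intro h v
    rw [hfapply, hfapply]
    have h1 : e₁ (⟨ρ h ↑v, hW₁inv h ↑v v.2⟩ : W₁) = ρP h (e₁ v) := he₁' h v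
    rw [h1, he₂symm, map_add, map_smul]
  have hWinv : Invt ρ W := by
    intro h u hu
    obtain ⟨v, rfl⟩ := hu
    exact ⟨⟨ρ h ↑v, hW₁inv h ↑v v.2⟩, hfequiv h v⟩
  have hW₁W₂ : W₁ ⊓ W₂ = ⊥ := by
    have h1 : W₁ ⊓ W₂ ≤ Y ⊓ Z := inf_le_inf hW₁Y hW₂Z
    rw [hYZ] at h1
    exact le_bot_iff.mp h1
  have hfinj : ∀ v : W₁, f v = 0 → v = 0 := by
    intro v hv
    rw [hfapply] at hv
    have h1 : (↑v : V) ∈ W₁ ⊓ W₂ := by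
      refine Submodule.mem_inf.mpr ⟨v.2, ?_⟩
      have h2 : (↑v : V) = -(l • ↑(e₂.symm (e₁ v))) := eq_neg_of_add_eq_zero_left hv
      rw [h2]
      exact W₂.neg_mem (W₂.smul_mem l (e₂.symm (e₁ v)).2)
    rw [hW₁W₂] at h1
    exact Subtype.ext (by simpa using h1)
  have hWne : W ≠ ⊥ := by
    obtain ⟨v, hvW, hv0⟩ := (Submodule.ne_bot_iff W₁).mp hW₁ne
    intro h0
    have hm : f ⟨v, hvW⟩ ∈ W := ⟨_, rfl⟩
    rw [h0] at hm
    have hz : f ⟨v, hvW⟩ = 0 := by simpa using hm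
    have hv := hfinj _ hz
    exact hv0 (by simpa using congrArg Subtype.val hv)
  have hWirr : IrredSub ρ W := by
    refine ⟨hWinv, hWne, ?_⟩
    intro U hUW hUinv
    let U₁ : Submodule ℂ V := Submodule.map W₁.subtype (Submodule.comap f U)
    have hU₁W₁ : U₁ ≤ W₁ := by
      rintro x ⟨v, hv, rfl⟩
      exact v.2
    have hU₁inv : Invt ρ U₁ := by
      rintro h x ⟨v, hv, rfl⟩
      refine ⟨⟨ρ h ↑v, hW₁inv h ↑v v.2⟩, ?_, rfl⟩
      show f _ ∈ U
      rw [hfequiv]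
      exact hUinv h (f v) hv
    rcases hW₁.2.2 U₁ hU₁W₁ hU₁inv with h | h
    · left
      rw [eq_bot_iff]
      intro u hu
      obtain ⟨v, rfl⟩ := hUW hu
      have hm : (↑v : V) ∈ U₁ := ⟨v, hu, rfl⟩
      rw [h] at hm
      have hv0 : v = 0 := Subtype.ext (by simpa using hm)
      rw [hv0, map_zero]
      exact Submodule.zero_mem ⊥
    · right
      apply le_antisymm hUW
      intro u hu
      rw [hWdef] at hu
      obtain ⟨v, hv⟩ := LinearMap.mem_range.mp hu
      have hvm : (↑v : V) ∈ U₁ := by rw [h]; exact v.2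
      obtain ⟨v', hv', hvv⟩ := hvm
      have hveq : v' = v := Subtype.ext hvv
      rw [← hv, ← hveq]
      exact hv'
  -- the value of B on the graph
  have hBs : ∀ (v v' : W₁),
      B (f v) (f v') = (l * μ + σ (l * μ)) * b (e₁ v) (e₁ v') := by
    intro v v'
    rw [hfapply, hfapply]
    have e0 : B (↑v) ↑v' = 0 := hW₁0 _ v.2 _ v'.2
    have eyy : B ↑(e₂.symm (e₁ v)) ↑(e₂.symm (e₁ v')) = 0 :=
      hW₂0 _ (e₂.symm (e₁ v)).2 _ (e₂.symm (e₁ v')).2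
    have exy : B ↑v ↑(e₂.symm (e₁ v')) = μ * b (e₁ v) (e₁ v') := by
      have hcc : ct (e₁ v) (e₁ v') = B ↑v ↑(e₂.symm (e₁ v')) := by
        show B ↑(e₁.symm (e₁ v)) _ = _
        rw [e₁.symm_apply_apply]
      rw [← hcc, hμ]
    have eyx : B ↑(e₂.symm (e₁ v)) ↑v' = σ μ * b (e₁ v) (e₁ v') := by
      rw [hBsym]
      have hcc : ct (e₁ v') (e₁ v) = B ↑v' ↑(e₂.symm (e₁ v)) := by
        show B ↑(e₁.symm (e₁ v')) _ = _
        rw [e₁.symm_apply_apply]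
      rw [← hcc, hμ, hbsym (e₁ v) (e₁ v')]
      simp only [map_mul, hσσ, hσε]
      linear_combination σ μ * b (e₁ v) (e₁ v') * hεε
    have expand : B (↑v + l • ↑(e₂.symm (e₁ v))) (↑v' + l • ↑(e₂.symm (e₁ v'))) =
        B ↑v ↑v' + l * B ↑v ↑(e₂.symm (e₁ v')) + σ l * B ↑(e₂.symm (e₁ v)) ↑v'
        + σ l * (l * B ↑(e₂.symm (e₁ v)) ↑(e₂.symm (e₁ v'))) := by
      rw [hB1, hB2, hB2, hB4, hB3, hB3, hB4]
      ring
    rw [expand, e0, eyy, exy, eyx, map_mul]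
    ring
  -- conclusion
  refine ⟨W, hWirr, ?_⟩
  intro u hu huz
  obtain ⟨v, rfl⟩ := hu
  have hall : ∀ y : P, b (e₁ v) y = 0 := by
    intro y
    have h1 : B (f v) (f (e₁.symm y)) = 0 := huz _ ⟨_, rfl⟩
    rw [hBs, e₁.apply_symm_apply] at h1
    rcases mul_eq_zero.mp h1 with h | h
    · exact absurd h hl
    · exact h
  have h0 : e₁ v = 0 := hbnd _ hall
  have hv0 : v = 0 := by
    have h2 := congrArg e₁.symm h0
    rwa [e₁.symm_apply_apply, map_zero] at h2
  rw [hv0, map_zero]
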